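/- arXiv:2104.12010 — 2 statements merged into one kernel-verified Lean document; each statement's English description precedes it below -/
import Mathlib

section
/- Let φ be a signed Radon measure on [-d,0] with Hahn–Jordan decomposition φ = φ⁺ − φ⁻, and suppose φ⁻ ≠ 0 with total mass m = φ⁻([-d,0]) > 0. Then there exists a nonnegative continuous function x₁* on [-d,0] such that ∫_{-d}^0 x₁*(s) dφ(s) < −m/2. -/
open MeasureTheory

/-- If the negative part of the Hahn–Jordan decomposition of a signed
Radon measure `φ` on `[-d,0]` is nonzero with total mass `m > 0`, then there is a
nonnegative continuous function `x₁*` with `∫ x₁* dφ < -m/2`. -/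
theorem stmt0 (d : ℝ) (hd : 0 < d)
    (φ : SignedMeasure (Set.Icc (-d) (0:ℝ)))
    (hneg : φ.toJordanDecomposition.negPart ≠ 0)
    (m : ℝ) (hm : m = (φ.toJordanDecomposition.negPart Set.univ).toReal)
    (hmpos : 0 < m) :
    ∃ x : C(Set.Icc (-d) (0:ℝ), ℝ), (∀ t, 0 ≤ x t) ∧
      ((∫ t, x t ∂φ.toJordanDecomposition.posPart) -
        ∫ t, x t ∂φ.toJordanDecomposition.negPart) < -(m / 2) := by
  set μ : Measure (Set.Icc (-d) (0:ℝ)) := φ.toJordanDecomposition.posPart with hμ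
  set ν : Measure (Set.Icc (-d) (0:ℝ)) := φ.toJordanDecomposition.negPart with hν
  have hsing : μ ⟂ₘ ν := φ.toJordanDecomposition.mutuallySingular
  obtain ⟨S, hSm, hμS, hνSc⟩ := hsing
  have hε : (0:ENNReal) < ENNReal.ofReal (m/8) := by
    simp [ENNReal.ofReal_pos]; linarith
  -- inner regularity of ν on S
  have hνS : ν S = ν Set.univ := by
    have := measure_add_measure_compl (μ := ν) hSm
    rw [hνSc, add_zero] at this
    exact this
  have hνfin : ν S ≠ ⊤ := by
    rw [hνS]; exact measure_ne_top ν _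
  obtain ⟨K, hKS, hKc, hKν⟩ := hSm.exists_isCompact_lt_add (μ := ν) hνfin hε.ne'
  -- outer regularity of μ around K
  have hμK : μ K = 0 := measure_mono_null hKS hμS
  obtain ⟨U, hKU, hUo, hμU⟩ := Set.exists_isOpen_lt_add (μ := μ) K (by simp [hμK]) hε.ne'
  rw [hμK, zero_add] at hμU
  -- Urysohn function
  obtain ⟨f, hf1, hf0, -, hf01⟩ := exists_continuous_one_zero_of_isCompact hKc
    hUo.isClosed_compl (Set.disjoint_left.mpr fun x hx hxc => hxc (hKU hx))
  refine ⟨f, fun t => (hf01 t).1, ?_⟩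
  have hfint : ∀ (ρ : Measure (Set.Icc (-d) (0:ℝ))) [IsFiniteMeasure ρ],
      Integrable f ρ := fun ρ _ =>
    f.continuous.integrable_of_hasCompactSupport (HasCompactSupport.of_compactSpace f)
  -- upper bound for ∫ f dμ
  have hub : ∫ t, f t ∂μ ≤ (μ U).toReal := by
    have h1 : ∫ t, f t ∂μ ≤ ∫ t, U.indicator 1 t ∂μ := by
      refine integral_mono (hfint μ) ?_ ?_
      · exact (integrable_indicator_iff hUo.measurableSet).2
          (integrableOn_const (measure_lt_top μ U).ne)
      · intro t
        by_cases ht : t ∈ U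
        · simpa [Set.indicator_of_mem ht] using (hf01 t).2
        · simpa [Set.indicator_of_notMem ht] using le_of_eq (hf0 ht)
    rwa [integral_indicator_one hUo.measurableSet] at h1
  -- lower bound for ∫ f dν
  have hlb : (ν K).toReal ≤ ∫ t, f t ∂ν := by
    have h1 : ∫ t, K.indicator 1 t ∂ν ≤ ∫ t, f t ∂ν := by
      refine integral_mono ?_ (hfint ν) ?_
      · exact (integrable_indicator_iff hKc.measurableSet).2
          (integrableOn_const (measure_lt_top ν K).ne)
      · intro t
        by_cases ht : t ∈ K
        · simpa [Set.indicator_of_mem ht] using le_of_eq (hf1 ht).symm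
        · simpa [Set.indicator_of_notMem ht] using (hf01 t).1
    rwa [integral_indicator_one hKc.measurableSet] at h1
  -- numeric bounds
  have hμUr : (μ U).toReal < m/8 := by
    have := ENNReal.toReal_lt_toReal (measure_ne_top μ U) (by simp) |>.2 hμU
    simpa [ENNReal.toReal_ofReal (by linarith : (0:ℝ) ≤ m/8)] using this
  have hνKr : m - m/8 < (ν K).toReal := by
    have h2 : ν Set.univ < ν K + ENNReal.ofReal (m/8) := by rw [← hνS]; exact hKν
    have h3 := ENNReal.toReal_lt_toReal (measure_ne_top ν _)
      (ENNReal.add_ne_top.2 ⟨measure_ne_top ν K, by simp⟩) |>.2 h2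
    rw [ENNReal.toReal_add (measure_ne_top ν K) (by simp),
      ENNReal.toReal_ofReal (by linarith : (0:ℝ) ≤ m/8)] at h3
    linarith
  linarith
end

section
/- Let E(t) > 0 and y(t) be continuous functions on [0,∞) with y(t) = E(t)(x₀ + I(t)), where I(t) = ∫_0^t E(u)⁻¹ (∫_{-d}^0 y(u+s) dφ(s)) du, x₀ > 0, y(s) = x₁(s) ≥ 0 for s ∈ [-d,0), and φ a nonnegative finite Borel measure on [-d,0]. Then y(t) > 0 for all t ≥ 0. -/
open MeasureTheory intervalIntegral

/-- positivity of labor income under a nonnegative delay measure, via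
the variation-of-constants representation `y(t) = E(t)(x₀ + I(t))` with
`I(t) = ∫_0^t E(u)⁻¹ (∫_{-d}^0 y(u+s) dφ(s)) du`, `x₀ > 0`, nonnegative past path,
and `φ ≥ 0`: then `y(t) > 0` for all `t ≥ 0`. -/
theorem stmt16 (d x₀ : ℝ) (hd : 0 < d) (hx₀ : 0 < x₀)
    (φ : Measure (Set.Icc (-d) (0:ℝ))) [IsFiniteMeasure φ]
    (E y : ℝ → ℝ)
    (hEc : ContinuousOn E (Set.Ici 0)) (hyc : ContinuousOn y (Set.Ici 0))
    (hEpos : ∀ t ≥ (0:ℝ), 0 < E t)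
    (hpast : ∀ s ∈ Set.Ico (-d) (0:ℝ), 0 ≤ y s)
    (hrep : ∀ t ≥ (0:ℝ), y t = E t * (x₀ +
      ∫ u in (0:ℝ)..t, (E u)⁻¹ * ∫ s : Set.Icc (-d) (0:ℝ), y (u + (s:ℝ)) ∂φ)) :
    ∀ t ≥ (0:ℝ), 0 < y t := by
  intro t ht
  by_contra hcon
  push_neg at hcon
  set S : Set ℝ := Set.Ici 0 ∩ y ⁻¹' Set.Iic 0 with hS
  have hSne : S.Nonempty := ⟨t, ht, hcon⟩
  have hSbdd : BddBelow S := ⟨0, fun x hx => hx.1⟩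
  have hSclosed : IsClosed S :=
    hyc.preimage_isClosed_of_isClosed isClosed_Ici isClosed_Iic
  set T := sInf S with hTdef
  have hTmem : T ∈ S := hSclosed.csInf_mem hSne hSbdd
  have hT0 : (0:ℝ) ≤ T := hTmem.1
  have hyT : y T ≤ 0 := hTmem.2
  have hy0 : 0 < y 0 := by
    have h := hrep 0 le_rfl
    simp only [intervalIntegral.integral_same, add_zero] at h
    rw [h]
    exact mul_pos (hEpos 0 le_rfl) hx₀
  have hTpos : 0 < T := by
    rcases hT0.lt_or_eq with h | h
    · exact h
    · exfalso; rw [← h] at hyT; exact absurd hyT (not_le.2 hy0)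
  have hlt : ∀ u, 0 ≤ u → u < T → 0 < y u := by
    intro u hu huT
    by_contra h
    push_neg at h
    exact absurd (csInf_le hSbdd ⟨hu, h⟩) (not_le.2 huT)
  have hynn : ∀ v, -d ≤ v → v < T → 0 ≤ y v := by
    intro v h1 h2
    rcases lt_or_ge v 0 with h | h
    · exact hpast v ⟨h1, h⟩
    · exact (hlt v h h2).le
  have key : ∀ t' ∈ Set.Ico (0:ℝ) T, E t' * x₀ ≤ y t' := by
    intro t' ht'
    rw [hrep t' ht'.1]
    have hInn : 0 ≤ ∫ u in (0:ℝ)..t',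
        (E u)⁻¹ * ∫ s : Set.Icc (-d) (0:ℝ), y (u + (s:ℝ)) ∂φ := by
      apply intervalIntegral.integral_nonneg ht'.1
      intro u hu
      apply mul_nonneg (inv_nonneg.2 (hEpos u hu.1).le)
      apply MeasureTheory.integral_nonneg
      intro s
      apply hynn
      · have := s.2.1; linarith [hu.1]
      · have := s.2.2; linarith [hu.2, ht'.2]
    nlinarith [hEpos t' ht'.1]
  haveI : (nhdsWithin T (Set.Ioo 0 T)).NeBot := by
    apply mem_closure_iff_nhdsWithin_neBot.1
    rw [closure_Ioo hTpos.ne]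
    exact ⟨hT0, le_rfl⟩
  have htend : Filter.Tendsto (fun s => y s - E s * x₀) (nhdsWithin T (Set.Ioo 0 T))
      (nhds (y T - E T * x₀)) := by
    have hy' : ContinuousWithinAt y (Set.Ici 0) T := hyc T hT0
    have hE' : ContinuousWithinAt E (Set.Ici 0) T := hEc T hT0
    have : ContinuousWithinAt (fun s => y s - E s * x₀) (Set.Ici 0) T :=
      hy'.sub (hE'.mul continuousWithinAt_const)
    exact this.mono (fun x hx => hx.1.le)
  have hle : (0:ℝ) ≤ y T - E T * x₀ := by
    apply ge_of_tendsto htend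
    filter_upwards [self_mem_nhdsWithin] with s hs
    exact sub_nonneg.2 (key s ⟨hs.1.le, hs.2⟩)
  have : 0 < y T := lt_of_lt_of_le (mul_pos (hEpos T hT0) hx₀) (by linarith)
  exact absurd hyT (not_le.2 this)
end
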